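/- For all x, y ∈ Hⁿ, setting a = P₁(x, y) and b = P₂(x, y), one has f(a, b) = 64/⟨x+y, e⟩² = 64/(x₀ + y₀)², where f(a, b) = (2+‖a‖+‖b‖)(2−‖a‖+‖b‖)(2+‖a‖−‖b‖)(2−‖a‖−‖b‖). -/

import Mathlib

open scoped BigOperators

noncomputable section

/-- The Minkowski product on `ℝ^{n+1}`: `⟨x,y⟩ = -x₀y₀ + ∑_{i=1}^n xᵢyᵢ`. -/
def mink {n : ℕ} (x y : Fin (n + 1) → ℝ) : ℝ :=
  -(x 0 * y 0) + ∑ i : Fin n, x i.succ * y i.succ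

/-- The vector `e = (1, 0, …, 0)` in `ℝ^{n+1}`. -/
def eVec (n : ℕ) : Fin (n + 1) → ℝ := fun i => if i = 0 then 1 else 0

/-- Projection `𝒫 : ℝ^{n+1} → ℝⁿ`, forgetting the 0-th coordinate, landing in
Euclidean space (with the Euclidean norm). -/
def proj {n : ℕ} (x : Fin (n + 1) → ℝ) : EuclideanSpace ℝ (Fin n) :=
  WithLp.toLp 2 (fun i : Fin n => x i.succ)

/-- The hyperboloid model `Hⁿ = {x : ⟨x,x⟩ = -1, x₀ > 0}`. -/
def Hyp (n : ℕ) : Set (Fin (n + 1) → ℝ) := {x | mink x x = -1 ∧ 0 < x 0}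

/-- First component of the Pogorelov map: `P₁(x,y) = 2𝒫(x)/(-⟨x+y,e⟩)`. -/
def P1 {n : ℕ} (x y : Fin (n + 1) → ℝ) : EuclideanSpace ℝ (Fin n) :=
  (2 / (-(mink (x + y) (eVec n)))) • proj x

/-- Second component of the Pogorelov map: `P₂(x,y) = 2𝒫(y)/(-⟨x+y,e⟩)`. -/
def P2 {n : ℕ} (x y : Fin (n + 1) → ℝ) : EuclideanSpace ℝ (Fin n) :=
  (2 / (-(mink (x + y) (eVec n)))) • proj y

/-- The function `f(a,b) = (2+‖a‖+‖b‖)(2-‖a‖+‖b‖)(2+‖a‖-‖b‖)(2-‖a‖-‖b‖)`. -/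
def fQ {n : ℕ} (a b : EuclideanSpace ℝ (Fin n)) : ℝ :=
  (2 + ‖a‖ + ‖b‖) * (2 - ‖a‖ + ‖b‖) * (2 + ‖a‖ - ‖b‖) * (2 - ‖a‖ - ‖b‖)

/-- The vector in `ℝ^{n+1}` with 0-th coordinate `t` and `𝒫`-projection `v`. -/
def liftVec {n : ℕ} (t : ℝ) (v : EuclideanSpace ℝ (Fin n)) : Fin (n + 1) → ℝ :=
  Fin.cons t (fun i => v i)

/-- First component of `Ψ(a,b)`, namely `(√(‖x̂‖²+1), x̂)` with `x̂ = 4a/√f(a,b)`. -/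
def Psi1 {n : ℕ} (a b : EuclideanSpace ℝ (Fin n)) : Fin (n + 1) → ℝ :=
  liftVec (Real.sqrt (‖(4 / Real.sqrt (fQ a b)) • a‖ ^ 2 + 1)) ((4 / Real.sqrt (fQ a b)) • a)

/-- Second component of `Ψ(a,b)`, namely `(√(‖ŷ‖²+1), ŷ)` with `ŷ = 4b/√f(a,b)`. -/
def Psi2 {n : ℕ} (a b : EuclideanSpace ℝ (Fin n)) : Fin (n + 1) → ℝ :=
  liftVec (Real.sqrt (‖(4 / Real.sqrt (fQ a b)) • b‖ ^ 2 + 1)) ((4 / Real.sqrt (fQ a b)) • b)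

/-- for `x, y ∈ Hⁿ` and `(a,b) = Φ(x,y)`, one has
`f(a,b) = 64/⟨x+y,e⟩² = 64/(x₀+y₀)²`. -/
theorem statement_16 {n : ℕ} (hn : 1 ≤ n) (x y : Fin (n + 1) → ℝ)
    (hx : x ∈ Hyp n) (hy : y ∈ Hyp n) :
    fQ (P1 x y) (P2 x y) = 64 / (mink (x + y) (eVec n)) ^ 2 ∧
    fQ (P1 x y) (P2 x y) = 64 / (x 0 + y 0) ^ 2 := by
  obtain ⟨hx1, hx0⟩ := hx
  obtain ⟨hy1, hy0⟩ := hy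
  have hs : 0 < x 0 + y 0 := by linarith
  have hsne : (x 0 + y 0) ≠ 0 := ne_of_gt hs
  have hm : mink (x + y) (eVec n) = -(x 0 + y 0) := by
    simp [mink, eVec, Fin.succ_ne_zero, Pi.add_apply]
  have hpx : ‖proj (n := n) x‖ ^ 2 = x 0 ^ 2 - 1 := by
    have h1 : ∑ i : Fin n, x i.succ * x i.succ = x 0 * x 0 - 1 := by
      unfold mink at hx1; linarith
    rw [EuclideanSpace.norm_eq, Real.sq_sqrt (by positivity)]
    simp only [proj, PiLp.toLp_apply, Real.norm_eq_abs, sq_abs]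
    simp only [pow_two]; exact h1
  have hpy : ‖proj (n := n) y‖ ^ 2 = y 0 ^ 2 - 1 := by
    have h1 : ∑ i : Fin n, y i.succ * y i.succ = y 0 * y 0 - 1 := by
      unfold mink at hy1; linarith
    rw [EuclideanSpace.norm_eq, Real.sq_sqrt (by positivity)]
    simp only [proj, PiLp.toLp_apply, Real.norm_eq_abs, sq_abs]
    simp only [pow_two]; exact h1
  have hA : ‖P1 x y‖ ^ 2 = 4 * (x 0 ^ 2 - 1) / (x 0 + y 0) ^ 2 := by
    rw [P1, hm, norm_smul, mul_pow, Real.norm_eq_abs, sq_abs, hpx]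
    field_simp
    ring
  have hB : ‖P2 x y‖ ^ 2 = 4 * (y 0 ^ 2 - 1) / (x 0 + y 0) ^ 2 := by
    rw [P2, hm, norm_smul, mul_pow, Real.norm_eq_abs, sq_abs, hpy]
    field_simp
    ring
  have key : fQ (P1 x y) (P2 x y) = 64 / (x 0 + y 0) ^ 2 := by
    have hf : fQ (P1 x y) (P2 x y)
        = (4 + ‖P2 x y‖ ^ 2 - ‖P1 x y‖ ^ 2) ^ 2 - 16 * ‖P2 x y‖ ^ 2 := by
      unfold fQ; ring
    rw [hf, hA, hB]
    field_simp
    ring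
  refine ⟨?_, key⟩
  rw [hm, key, neg_pow]
  ring_nf
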